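/- Let D be the finite distribution monad on Sets, whose algebras are convex sets. For any coalgebra b : X → D(X) for the induced comonad D̄ on convex sets, the set X_b = {x ∈ X : b(x) = 1x} equals the set ∂X of extreme points of X. -/

import Mathlib

open scoped NNReal

/-- The finite (discrete probability) distribution monad on `Sets`:
finitely supported functions to `ℝ≥0` summing to `1`. -/
def FinDist (X : Type u) : Type u :=
  {φ : X →₀ ℝ≥0 // φ.sum (fun _ r => r) = 1}

/-- Unit of the distribution monad: the Dirac distribution `1·x`. -/
noncomputable def FinDist.pure {X : Type u} (x : X) : FinDist X :=
  ⟨Finsupp.single x 1, by simp⟩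

/-- Functorial action of the distribution monad. -/
noncomputable def FinDist.map {X Y : Type u} (f : X → Y) (φ : FinDist X) : FinDist Y :=
  ⟨Finsupp.mapDomain f φ.1, by
    rw [Finsupp.sum_mapDomain_index (fun _ => rfl) (fun _ _ _ => rfl)]
    exact φ.2⟩

/-- Multiplication of the distribution monad: flattening of a distribution of
distributions. -/
noncomputable def FinDist.join {X : Type u} (Φ : FinDist (FinDist X)) : FinDist X :=
  ⟨Φ.1.sum (fun φ r => r • φ.1), by
    rw [Finsupp.sum_sum_index (fun _ => rfl) (fun _ _ _ => rfl)]
    have h2 : ∀ (φ : FinDist X) (r : ℝ≥0), (r • φ.1).sum (fun _ s => s) = r := by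
      intro φ r
      rw [Finsupp.sum_smul_index (fun _ => rfl), ← Finsupp.mul_sum, φ.2, mul_one]
    simp only [h2]
    exact Φ.2⟩

/-- A finitely supported `ℝ≥0`-valued function summing to `1` and vanishing away
from `x` is the Dirac distribution at `x`. -/
theorem dirac_of_vanish {X : Type u} (f : X →₀ ℝ≥0) (x : X)
    (hsum : f.sum (fun _ r => r) = 1) (hz : ∀ z, z ≠ x → f z = 0) :
    f = Finsupp.single x 1 := by
  have hf : f = Finsupp.single x (f x) := by
    ext z
    by_cases h : z = x
    · subst h; simp
    · rw [hz z h, Finsupp.single_eq_of_ne' (Ne.symm h)]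
  rw [hf, Finsupp.sum_single_index rfl] at hsum
  rw [hf, hsum]


/-- For an algebra `a : D(X) → X` of the distribution monad (a convex set) and a
coalgebra `b : X → D(X)` for the induced comonad on convex sets, the set
`X_b = {x | b x = 1·x}` equals the set of extreme points of `X` (where `x` is extreme
iff it admits no non-trivial representation as a convex combination). -/
theorem bases_as_coalgebras_stmt8 {X : Type u}
    (a : FinDist X → X)
    (ha_unit : ∀ x : X, a (FinDist.pure x) = x)
    (ha_assoc : ∀ Φ : FinDist (FinDist X), a (FinDist.join Φ) = a (FinDist.map a Φ))
    (b : X → FinDist X)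
    (hb_affine : ∀ φ : FinDist X, b (a φ) = FinDist.join (FinDist.map b φ))
    (hb_counit : ∀ x : X, a (b x) = x)
    (hb_coassoc : ∀ x : X,
      FinDist.map FinDist.pure (b x) = FinDist.map b (b x)) :
    {x : X | b x = FinDist.pure x} =
      {x : X | ∀ φ : FinDist X, a φ = x → φ = FinDist.pure x} := by
  ext x
  simp only [Set.mem_setOf_eq]
  constructor
  · intro hx φ hφ
    have hkey : FinDist.join (FinDist.map b φ) = FinDist.pure x := by
      rw [← hb_affine, hφ, hx]
    have hkey1 : φ.1.sum (fun y r => r • (b y).1) = Finsupp.single x 1 := by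
      have h := congrArg Subtype.val hkey
      have hrw : (FinDist.join (FinDist.map b φ)).1
          = φ.1.sum (fun y r => r • (b y).1) := by
        show (Finsupp.mapDomain b φ.1).sum (fun ψ r => r • ψ.1) = _
        rw [Finsupp.sum_mapDomain_index (fun (ψ : FinDist X) => zero_smul ℝ≥0 ψ.1)
          (fun (ψ : FinDist X) (r s : ℝ≥0) => add_smul r s ψ.1)]
      rw [hrw] at h
      exact h
    have hsupp : ∀ y ∈ φ.1.support, b y = FinDist.pure x := by
      intro y hy
      refine Subtype.ext (dirac_of_vanish _ _ (b y).2 ?_)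
      intro z hzx
      have h0 : (φ.1.sum (fun y r => r • (b y).1)) z = 0 := by
        rw [hkey1, Finsupp.single_eq_of_ne' (Ne.symm hzx)]
      rw [Finsupp.sum_apply] at h0
      have h1 : φ.1 y • (b y).1 z = 0 := by
        have := (Finset.sum_eq_zero_iff).mp h0 y hy
        simpa using this
      have hφy : φ.1 y ≠ 0 := Finsupp.mem_support_iff.mp hy
      exact (mul_eq_zero.mp h1).resolve_left hφy
    have hsupp' : ∀ z, z ≠ x → φ.1 z = 0 := by
      intro z hzx
      by_contra hne
      have hz : z ∈ φ.1.support := Finsupp.mem_support_iff.mpr hne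
      have := hb_counit z
      rw [hsupp z hz, ha_unit] at this
      exact hzx this.symm
    exact Subtype.ext (dirac_of_vanish _ _ φ.2 hsupp')
  · intro hx
    exact hx (b x) (hb_counit x)
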